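/- If a nonnegative weight sequence (w̃_n)_{n≥1} satisfies ∑_{n=1}^∞ w̃_n |u_n|² ≤ ∑_{n=1}^∞ |u_n − u_{n−1}|² for every finitely supported complex sequence u with u_0 = 0, and w̃_n ≥ w_n for all n ≥ 1, then for every finitely supported complex sequence u with u_0 = 0 one has 0 ≤ ∑_{n=1}^∞ (w̃_n − w_n)|u_n|² ≤ ∑_{n=2}^∞ |((n−1)/n)^{1/4} u_n − (n/(n−1))^{1/4} u_{n−1}|², where w_n := 2 − √((n+1)/n) − √((n−1)/n). -/

import Mathlib

private lemma rpow_sq_sqrt {q : ℝ} (hq : 0 ≤ q) : (q ^ ((1:ℝ)/4)) ^ 2 = Real.sqrt q := by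
  rw [← Real.rpow_natCast (q ^ ((1:ℝ)/4)) 2, ← Real.rpow_mul hq,
    show ((1:ℝ)/4) * ((2:ℕ):ℝ) = 1/2 by norm_num, ← Real.sqrt_eq_rpow]

private lemma step_eq (u : ℕ → ℂ) (n : ℕ) :
    ‖u (n+2) - u (n+1)‖ ^ 2
      + (1 - Real.sqrt ((n : ℝ) / ((n : ℝ) + 1))) * ‖u (n+1)‖ ^ 2
  = (2 - Real.sqrt (((n : ℝ) + 2) / ((n : ℝ) + 1))
        - Real.sqrt ((n : ℝ) / ((n : ℝ) + 1))) * ‖u (n+1)‖ ^ 2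
    + ‖((((n : ℝ) + 1) / ((n : ℝ) + 2)) ^ ((1 : ℝ) / 4) : ℝ) * u (n+2)
        - ((((n : ℝ) + 2) / ((n : ℝ) + 1)) ^ ((1 : ℝ) / 4) : ℝ) * u (n+1)‖ ^ 2
    + (1 - Real.sqrt (((n : ℝ) + 1) / ((n : ℝ) + 2))) * ‖u (n+2)‖ ^ 2 := by
  have h1 : (0:ℝ) ≤ ((n:ℝ)+1)/((n:ℝ)+2) := by positivity
  have h2 : (0:ℝ) ≤ ((n:ℝ)+2)/((n:ℝ)+1) := by positivity
  have hα := rpow_sq_sqrt h1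
  have hβ := rpow_sq_sqrt h2
  set α := ((((n:ℝ)+1)/((n:ℝ)+2)) ^ ((1:ℝ)/4)) with hαdef
  set β := ((((n:ℝ)+2)/((n:ℝ)+1)) ^ ((1:ℝ)/4)) with hβdef
  have hαβ : α * β = 1 := by
    rw [hαdef, hβdef, ← Real.mul_rpow h1 h2,
      show (((n:ℝ)+1)/((n:ℝ)+2)) * (((n:ℝ)+2)/((n:ℝ)+1)) = 1 by
        field_simp, Real.one_rpow]
  rw [← hα, ← hβ]
  simp only [Complex.sq_norm, Complex.normSq_apply, Complex.sub_re, Complex.sub_im,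
    Complex.mul_re, Complex.mul_im, Complex.ofReal_re, Complex.ofReal_im]
  linear_combination (2*((u (n+2)).re*(u (n+1)).re + (u (n+2)).im*(u (n+1)).im)) * hαβ

private lemma sum_id (u : ℕ → ℂ) (hu0 : u 0 = 0) (N : ℕ) :
    ∑ n ∈ Finset.range (N+1), ‖u (n+1) - u n‖ ^ 2
  = ∑ n ∈ Finset.range N, ((2 - Real.sqrt (((n : ℝ) + 2) / ((n : ℝ) + 1))
        - Real.sqrt ((n : ℝ) / ((n : ℝ) + 1))) * ‖u (n+1)‖ ^ 2
      + ‖((((n : ℝ) + 1) / ((n : ℝ) + 2)) ^ ((1 : ℝ) / 4) : ℝ) * u (n+2)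
          - ((((n : ℝ) + 2) / ((n : ℝ) + 1)) ^ ((1 : ℝ) / 4) : ℝ) * u (n+1)‖ ^ 2)
    + (1 - Real.sqrt ((N : ℝ) / ((N : ℝ) + 1))) * ‖u (N+1)‖ ^ 2 := by
  induction N with
  | zero => simp [hu0]
  | succ N ih =>
    rw [Finset.sum_range_succ, ih, Finset.sum_range_succ]
    have h := step_eq u N
    push_cast
    have e1 : N + 1 + 1 = N + 2 := by omega
    have e2 : ((N:ℝ) + 1 + 1) = (N:ℝ) + 2 := by ring
    rw [e1, e2]
    linarith [h]


/-- Towards optimality: if a nonnegative weight `wtilde` with `wtilde n ≥ w n` for `n ≥ 1` satisfies the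
Hardy inequality for all finitely supported complex sequences vanishing at `0`, then for every
such sequence `u`,
`0 ≤ ∑_{n≥1} (wtilde n - w n)|u n|² ≤ ∑_{n≥2} |((n-1)/n)^{1/4} u n - (n/(n-1))^{1/4} u (n-1)|²`,
where `w n = 2 - √((n+1)/n) - √((n-1)/n)`. -/
theorem towards_optimality (wtilde : ℕ → ℝ)
    (hpos : ∀ n : ℕ, 1 ≤ n → 0 ≤ wtilde n)
    (hge : ∀ n : ℕ, 1 ≤ n →
      2 - Real.sqrt (((n : ℝ) + 1) / (n : ℝ)) - Real.sqrt (((n : ℝ) - 1) / (n : ℝ)) ≤ wtilde n)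
    (hin : ∀ u : ℕ → ℂ, u 0 = 0 → (Function.support u).Finite →
      ∑' n : ℕ, wtilde (n + 1) * ‖u (n + 1)‖ ^ 2 ≤
        ∑' n : ℕ, ‖u (n + 1) - u n‖ ^ 2) :
    ∀ u : ℕ → ℂ, u 0 = 0 → (Function.support u).Finite →
      0 ≤ ∑' n : ℕ, (wtilde (n + 1) - (2 - Real.sqrt (((n : ℝ) + 2) / ((n : ℝ) + 1))
            - Real.sqrt ((n : ℝ) / ((n : ℝ) + 1)))) * ‖u (n + 1)‖ ^ 2
      ∧ ∑' n : ℕ, (wtilde (n + 1) - (2 - Real.sqrt (((n : ℝ) + 2) / ((n : ℝ) + 1))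
            - Real.sqrt ((n : ℝ) / ((n : ℝ) + 1)))) * ‖u (n + 1)‖ ^ 2 ≤
          ∑' n : ℕ,
            ‖((((n : ℝ) + 1) / ((n : ℝ) + 2)) ^ ((1 : ℝ) / 4) : ℝ) * u (n + 2)
              - ((((n : ℝ) + 2) / ((n : ℝ) + 1)) ^ ((1 : ℝ) / 4) : ℝ) * u (n + 1)‖ ^ 2 := by
  intro u hu0 hfin
  obtain ⟨N, hN⟩ : ∃ N : ℕ, ∀ m, N + 1 ≤ m → u m = 0 := by
    obtain ⟨N, hN⟩ := hfin.bddAbove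
    exact ⟨N, fun m hm => by
      by_contra h
      exact absurd (hN (Function.mem_support.mpr h)) (by omega)⟩
  have hterm : ∀ n : ℕ, 0 ≤ (wtilde (n + 1) - (2 - Real.sqrt (((n : ℝ) + 2) / ((n : ℝ) + 1))
      - Real.sqrt ((n : ℝ) / ((n : ℝ) + 1)))) * ‖u (n + 1)‖ ^ 2 := by
    intro n
    have h := hge (n + 1) (by omega)
    push_cast at h
    have h2 : ((n:ℝ) + 1 + 1) = (n:ℝ) + 2 := by ring
    have h3 : ((n:ℝ) + 1 - 1) = (n:ℝ) := by ring
    rw [h2, h3] at h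
    exact mul_nonneg (by linarith) (sq_nonneg _)
  constructor
  · exact tsum_nonneg hterm
  · -- convert all tsums to finite sums
    have hL : ∑' n : ℕ, (wtilde (n + 1) - (2 - Real.sqrt (((n : ℝ) + 2) / ((n : ℝ) + 1))
          - Real.sqrt ((n : ℝ) / ((n : ℝ) + 1)))) * ‖u (n + 1)‖ ^ 2
        = ∑ n ∈ Finset.range N, (wtilde (n + 1) - (2 - Real.sqrt (((n : ℝ) + 2) / ((n : ℝ) + 1))
          - Real.sqrt ((n : ℝ) / ((n : ℝ) + 1)))) * ‖u (n + 1)‖ ^ 2 := by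
      refine tsum_eq_sum fun b hb => ?_
      simp only [Finset.mem_range, not_lt] at hb
      simp [hN (b + 1) (by omega)]
    have hR : (∑' n : ℕ, ‖((((n : ℝ) + 1) / ((n : ℝ) + 2)) ^ ((1 : ℝ) / 4) : ℝ) * u (n + 2)
              - ((((n : ℝ) + 2) / ((n : ℝ) + 1)) ^ ((1 : ℝ) / 4) : ℝ) * u (n + 1)‖ ^ 2)
        = ∑ n ∈ Finset.range N, ‖((((n : ℝ) + 1) / ((n : ℝ) + 2)) ^ ((1 : ℝ) / 4) : ℝ) * u (n + 2)
              - ((((n : ℝ) + 2) / ((n : ℝ) + 1)) ^ ((1 : ℝ) / 4) : ℝ) * u (n + 1)‖ ^ 2 := by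
      refine tsum_eq_sum fun b hb => ?_
      simp only [Finset.mem_range, not_lt] at hb
      simp [hN (b + 1) (by omega), hN (b + 2) (by omega)]
    have hW : (∑' n : ℕ, wtilde (n + 1) * ‖u (n + 1)‖ ^ 2)
        = ∑ n ∈ Finset.range N, wtilde (n + 1) * ‖u (n + 1)‖ ^ 2 := by
      refine tsum_eq_sum fun b hb => ?_
      simp only [Finset.mem_range, not_lt] at hb
      simp [hN (b + 1) (by omega)]
    have hD : (∑' n : ℕ, ‖u (n + 1) - u n‖ ^ 2)
        = ∑ n ∈ Finset.range (N + 1), ‖u (n + 1) - u n‖ ^ 2 := by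
      refine tsum_eq_sum fun b hb => ?_
      simp only [Finset.mem_range, not_lt] at hb
      simp [hN (b + 1) (by omega), hN b (by omega)]
    have hin' := hin u hu0 hfin
    rw [hW, hD, sum_id u hu0 N, hN (N + 1) le_rfl] at hin'
    simp only [map_zero, norm_zero, ne_eq, OfNat.ofNat_ne_zero, not_false_eq_true, zero_pow, mul_zero,
      add_zero] at hin'
    rw [hL, hR]
    rw [Finset.sum_add_distrib] at hin'
    have hsub : ∑ n ∈ Finset.range N, (wtilde (n + 1) - (2 - Real.sqrt (((n : ℝ) + 2) / ((n : ℝ) + 1))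
          - Real.sqrt ((n : ℝ) / ((n : ℝ) + 1)))) * ‖u (n + 1)‖ ^ 2
        = (∑ n ∈ Finset.range N, wtilde (n + 1) * ‖u (n + 1)‖ ^ 2)
          - ∑ n ∈ Finset.range N, (2 - Real.sqrt (((n : ℝ) + 2) / ((n : ℝ) + 1))
          - Real.sqrt ((n : ℝ) / ((n : ℝ) + 1))) * ‖u (n + 1)‖ ^ 2 := by
      rw [← Finset.sum_sub_distrib]
      exact Finset.sum_congr rfl fun n _ => by ring
    linarith [hin', hsub.ge, hsub.le]
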